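/- arXiv:2005.07221 — 2 statements merged into one kernel-verified Lean document; each statement's English description precedes it below -/
import Mathlib

section
/- Define integers n_1 = 1 and n_{k+1} = n_k + 10^k + 1 for k ≥ 1, sets A_k = {n_k + 1, …, n_k + 10^k}, and the real sequence (b_j)_{j≥1} by b_j = 1/√k if j = n_k and b_j = −1/(10^k·√k) if j ∈ A_k. Then for every t ∈ (0,1], the quantity inf{ sup_{N ≥ 1} |∑_{i∈Λ, i ≤ N} b_i| : Λ is a t-greedy set for b with |Λ| = m } tends to +∞ as m → ∞; that is, for every R > 0 there is m_0 such that for all m ≥ m_0 and every t-greedy set Λ for b of cardinality m, sup_{N ≥ 1} |∑_{i∈Λ, i ≤ N} b_i| > R. (Interpreted in the completion of c_00 under the norm ‖(a_j)_j‖ = sup_N |∑_{j=1}^{N} a_j|, this says that every sequence of weak greedy sums of the element y = ∑ b_j e_j diverges in norm, so no choice of a sequence of gaps makes the thresholding greedy algorithm converge for y.) -/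
open Finset

/-- `nn k` is the integer `n_k` of the construction: `n_1 = 1`,
`n_{k+1} = n_k + 10^k + 1` for `k ≥ 1` (the value at `0` is irrelevant). -/
def nn : ℕ → ℕ
  | 0 => 0
  | 1 => 1
  | (k + 2) => nn (k + 1) + 10 ^ (k + 1) + 1

lemma nn_succ {k : ℕ} (hk : 1 ≤ k) : nn (k + 1) = nn k + 10 ^ k + 1 := by
  cases k with
  | zero => omega
  | succ j => rfl

lemma nn_ge {k : ℕ} (hk : 1 ≤ k) : k ≤ nn k := by
  induction k with
  | zero => omega
  | succ j ih =>
    rcases Nat.eq_or_lt_of_le hk with h | h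
    · rw [← h]; rfl
    · have hj : 1 ≤ j := by omega
      have h10 : 1 ≤ 10 ^ j := Nat.one_le_pow _ _ (by norm_num)
      have := ih hj
      rw [nn_succ hj]; omega

lemma nn_pos {k : ℕ} (hk : 1 ≤ k) : 1 ≤ nn k := le_trans hk (nn_ge hk)

lemma nn_lt {a b : ℕ} (ha : 1 ≤ a) (h : a < b) : nn a < nn b := by
  induction b with
  | zero => omega
  | succ n ih =>
    have h10 : 1 ≤ 10 ^ n := Nat.one_le_pow _ _ (by norm_num)
    rcases Nat.lt_succ_iff_lt_or_eq.mp h with h' | rfl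
    · have hn : 1 ≤ n := by omega
      have := ih h'
      rw [nn_succ hn]; omega
    · rw [nn_succ ha]; omega

lemma nn_mono {a b : ℕ} (ha : 1 ≤ a) (h : a ≤ b) : nn a ≤ nn b := by
  rcases Nat.eq_or_lt_of_le h with rfl | h'
  · exact le_rfl
  · exact le_of_lt (nn_lt ha h')

/-- block index of `j ≥ 1`: the unique `k ≥ 1` with `nn k ≤ j ≤ nn k + 10^k`. -/
def blk (j : ℕ) : ℕ := Nat.findGreatest (fun k => nn k ≤ j) j

lemma nn_one : nn 1 = 1 := rfl

lemma blk_ge_one {j : ℕ} (hj : 1 ≤ j) : 1 ≤ blk j :=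
  Nat.le_findGreatest hj (by rw [nn_one]; exact hj)

lemma blk_le {j : ℕ} (hj : 1 ≤ j) : nn (blk j) ≤ j :=
  Nat.findGreatest_spec (P := fun k => nn k ≤ j) hj (show nn 1 ≤ j from by rw [nn_one]; exact hj)

lemma blk_ub {j : ℕ} (hj : 1 ≤ j) : j ≤ nn (blk j) + 10 ^ (blk j) := by
  by_contra h
  push_neg at h
  have h1 : 1 ≤ blk j := blk_ge_one hj
  have hsucc : nn (blk j + 1) = nn (blk j) + 10 ^ (blk j) + 1 := nn_succ h1
  have hle : nn (blk j + 1) ≤ j := by omega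
  have hjb : blk j + 1 ≤ j := le_trans (nn_ge (by omega)) hle
  have h2 : blk j + 1 ≤ blk j := Nat.le_findGreatest (P := fun k => nn k ≤ j) hjb hle
  omega

lemma blk_eq {k j : ℕ} (hk : 1 ≤ k) (h1 : nn k ≤ j) (h2 : j ≤ nn k + 10 ^ k) : blk j = k := by
  have hj : 1 ≤ j := le_trans (nn_pos hk) h1
  have hge : k ≤ blk j := Nat.le_findGreatest (le_trans (nn_ge hk) h1) h1
  by_contra hne
  have hlt : k < blk j := by omega
  have : nn (k + 1) ≤ nn (blk j) := nn_mono (by omega) hlt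
  have h3 := blk_le hj
  rw [nn_succ hk] at this
  omega

lemma sum_rsqrt_ge (K : ℕ) : Real.sqrt K ≤ ∑ k ∈ Icc 1 K, 1 / Real.sqrt k := by
  induction K with
  | zero => simp
  | succ K ih =>
    rw [Finset.sum_Icc_succ_top (by omega)]
    have hu0 := Real.sqrt_nonneg (K : ℝ)
    have hv0 := Real.sqrt_nonneg ((K : ℝ) + 1)
    have hu2 : Real.sqrt K ^ 2 = K := Real.sq_sqrt (by positivity)
    have hv2 : Real.sqrt ((K : ℝ) + 1) ^ 2 = (K : ℝ) + 1 := Real.sq_sqrt (by positivity)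
    have huv : Real.sqrt K ≤ Real.sqrt ((K : ℝ) + 1) := Real.sqrt_le_sqrt (by linarith)
    have hv1 : 1 ≤ Real.sqrt ((K : ℝ) + 1) := by nlinarith
    have key : Real.sqrt ((K : ℝ) + 1) ≤ Real.sqrt K + 1 / Real.sqrt ((K : ℝ) + 1) := by
      rw [← sub_le_iff_le_add', le_div_iff₀ (by linarith)]
      nlinarith [mul_le_mul_of_nonneg_left huv hu0]
    calc Real.sqrt ((K : ℕ) + 1 : ℕ) = Real.sqrt ((K : ℝ) + 1) := by push_cast; ring_nf
      _ ≤ Real.sqrt K + 1 / Real.sqrt ((K : ℝ) + 1) := key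
      _ ≤ (∑ k ∈ Icc 1 K, 1 / Real.sqrt k) + 1 / Real.sqrt (((K : ℕ) + 1 : ℕ) : ℝ) := by
          push_cast; linarith
  
lemma sum_rsqrt_le (L : ℕ) : ∑ l ∈ Icc 1 L, 1 / Real.sqrt l ≤ 2 * Real.sqrt L := by
  induction L with
  | zero => simp
  | succ L ih =>
    rw [Finset.sum_Icc_succ_top (by omega)]
    have hu0 := Real.sqrt_nonneg (L : ℝ)
    have hv0 := Real.sqrt_nonneg ((L : ℝ) + 1)
    have hu2 : Real.sqrt L ^ 2 = L := Real.sq_sqrt (by positivity)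
    have hv2 : Real.sqrt ((L : ℝ) + 1) ^ 2 = (L : ℝ) + 1 := Real.sq_sqrt (by positivity)
    have hv1 : 1 ≤ Real.sqrt ((L : ℝ) + 1) := by nlinarith
    have key : 1 / Real.sqrt ((L : ℝ) + 1) ≤ 2 * Real.sqrt ((L : ℝ) + 1) - 2 * Real.sqrt L := by
      rw [div_le_iff₀ (by linarith)]
      nlinarith [sq_nonneg (Real.sqrt L - Real.sqrt ((L : ℝ) + 1))]
    have hcast : (((L : ℕ) + 1 : ℕ) : ℝ) = (L : ℝ) + 1 := by push_cast; ring
    rw [hcast]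
    linarith

lemma geom_sum_le10 (L : ℕ) : ∑ l ∈ Icc 1 L, 10 ^ l ≤ 2 * 10 ^ L := by
  induction L with
  | zero => simp
  | succ L ih =>
    rw [Finset.sum_Icc_succ_top (by omega), pow_succ]
    omega

lemma sqrt_le_tenpow (L : ℕ) : Real.sqrt L ≤ 10 ^ L := by
  have h : (L : ℝ) ≤ (10 ^ L) ^ 2 := by
    rw [← pow_mul]
    have : L < 100 ^ L := Nat.lt_pow_self (by norm_num)
    calc (L : ℝ) ≤ ((100 : ℝ) ^ L) := by exact_mod_cast this.le
      _ = 10 ^ (L * 2) := by rw [mul_comm, pow_mul]; norm_num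
  calc Real.sqrt L ≤ Real.sqrt ((10 ^ L) ^ 2) := Real.sqrt_le_sqrt h
    _ = 10 ^ L := Real.sqrt_sq (by positivity)

set_option maxHeartbeats 2000000

/-- For the element `b` of the construction, for every weakness parameter
`t ∈ (0,1]` the quantity `inf { sup_{N ≥ 1} |∑_{i ∈ Λ, i ≤ N} b_i| : Λ a
t-greedy set for b of cardinality m }` tends to `+∞` as `m → ∞`: every
sequence of weak greedy sums of `b` diverges in norm. -/
theorem stmt_4 (b : ℕ → ℝ)
    (hb1 : ∀ k : ℕ, 1 ≤ k → b (nn k) = 1 / Real.sqrt k)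
    (hb2 : ∀ k : ℕ, 1 ≤ k → ∀ j : ℕ, nn k < j → j ≤ nn k + 10 ^ k →
      b j = -(1 / (10 ^ k * Real.sqrt k))) :
    ∀ t : ℝ, 0 < t → t ≤ 1 → ∀ R : ℝ, 0 < R → ∃ m₀ : ℕ, ∀ m : ℕ, m₀ ≤ m →
      ∀ Λ : Finset ℕ, (∀ i ∈ Λ, 1 ≤ i) → Λ.card = m →
        (∀ i ∈ Λ, ∀ j : ℕ, 1 ≤ j → j ∉ Λ → t * |b j| ≤ |b i|) →
        R < ⨆ N : ℕ, |∑ i ∈ Λ.filter (fun i => i ≤ N + 1), b i| := by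
  intro t ht0 ht1 R hR0
  classical
  set C : ℝ := R + 1 + 2 * (R + 4) / t with hCdef
  have hCaux : 0 ≤ 2 * (R + 4) / t := by positivity
  have hC1 : 1 ≤ C := by rw [hCdef]; linarith
  have hC0 : 0 < C := by linarith
  refine ⟨⌈3 * C ^ 2 / t ^ 2 + 3 / t ^ 2⌉₊ + 1, ?_⟩
  intro m hm Λ hΛ1 hcard hgreedy
  have hmX : (3 * C ^ 2 / t ^ 2 + 3 / t ^ 2) < (m : ℝ) := by
    have h1 : (⌈3 * C ^ 2 / t ^ 2 + 3 / t ^ 2⌉₊ : ℝ) < (m : ℝ) := by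
      exact_mod_cast Nat.lt_of_lt_of_le (Nat.lt_succ_self _) hm
    exact lt_of_le_of_lt (Nat.le_ceil _) h1
  have hm1 : 0 < m := by omega
  have hΛne : Λ.Nonempty := Finset.card_pos.mp (by rw [hcard]; exact hm1)
  obtain ⟨i₀, hi₀Λ, hi₀min⟩ := Finset.exists_min_image Λ (fun i => |b i|) hΛne
  set s := |b i₀| with hsdef
  -- basic numeric facts
  have hsqrt1 : ∀ k : ℕ, 1 ≤ k → 1 ≤ Real.sqrt k := by
    intro k hk
    rw [show (1 : ℝ) = Real.sqrt 1 by simp]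
    exact Real.sqrt_le_sqrt (by exact_mod_cast hk)
  have hpow1 : ∀ k : ℕ, (1 : ℝ) ≤ 10 ^ k := fun k => one_le_pow₀ (by norm_num)
  -- values of b
  have hval : ∀ j : ℕ, 1 ≤ j →
      (j = nn (blk j) ∧ b j = 1 / Real.sqrt (blk j)) ∨
      (j ≠ nn (blk j) ∧ b j = -(1 / (10 ^ (blk j) * Real.sqrt (blk j)))) := by
    intro j hj
    by_cases h : j = nn (blk j)
    · refine Or.inl ⟨h, ?_⟩
      have h2 := hb1 (blk j) (blk_ge_one hj)
      rw [← h] at h2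
      exact h2
    · exact Or.inr ⟨h, hb2 _ (blk_ge_one hj) j (lt_of_le_of_ne (blk_le hj) (Ne.symm h)) (blk_ub hj)⟩
  have habs : ∀ j : ℕ, 1 ≤ j → 0 < |b j| ∧ |b j| ≤ 1 := by
    intro j hj
    have h1 : 1 ≤ blk j := blk_ge_one hj
    have hs1 : 1 ≤ Real.sqrt (blk j) := hsqrt1 _ h1
    have hp1 : (1 : ℝ) ≤ 10 ^ (blk j) := hpow1 _
    rcases hval j hj with ⟨_, hb⟩ | ⟨_, hb⟩
    · rw [hb, abs_of_pos (by positivity)]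
      constructor
      · positivity
      · rw [div_le_one (by linarith)]; linarith
    · rw [hb, abs_neg, abs_of_pos (by positivity)]
      constructor
      · positivity
      · rw [div_le_one (by positivity)]; nlinarith
  have hs0 : 0 < s := (habs i₀ (hΛ1 _ hi₀Λ)).1
  have hs1 : s ≤ 1 := (habs i₀ (hΛ1 _ hi₀Λ)).2
  have hsmin : ∀ j ∈ Λ, s ≤ |b j| := fun j hj => hi₀min j hj
  have hsout : ∀ j : ℕ, 1 ≤ j → j ∉ Λ → t * |b j| ≤ s := fun j hj hjn =>
    hgreedy i₀ hi₀Λ j hj hjn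
  -- membership criterion
  have hmem : ∀ k : ℕ, 1 ≤ k → (k : ℝ) * s ^ 2 < t ^ 2 → nn k ∈ Λ := by
    intro k hk hks
    by_contra hkn
    have h1 := hsout (nn k) (nn_pos hk) hkn
    have hsk : 0 < Real.sqrt k := lt_of_lt_of_le one_pos (hsqrt1 k hk)
    have h2 : |b (nn k)| = 1 / Real.sqrt k := by
      rw [hb1 _ hk, abs_of_pos (by positivity)]
    rw [h2, mul_one_div, div_le_iff₀ hsk] at h1
    have hsq : Real.sqrt k ^ 2 = (k : ℝ) := Real.sq_sqrt (by positivity)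
    nlinarith
  -- negatives and L
  set Λn := Λ.filter (fun j => j ≠ nn (blk j)) with hΛndef
  set L := Λn.sup blk with hLdef
  have hF2 : L = 0 ∨ (1 ≤ L ∧ s * ((10 : ℝ) ^ L * Real.sqrt L) ≤ 1) := by
    rcases Λn.eq_empty_or_nonempty with he | hne
    · left; rw [hLdef, he, Finset.sup_empty]; rfl
    · right
      obtain ⟨j₀, hj₀, hj₀sup⟩ := Finset.exists_mem_eq_sup Λn hne blk
      rw [Finset.mem_filter] at hj₀
      have hj₀1 : 1 ≤ j₀ := hΛ1 _ hj₀.1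
      have hL1 : 1 ≤ L := by rw [hLdef, hj₀sup]; exact blk_ge_one hj₀1
      refine ⟨hL1, ?_⟩
      rcases hval j₀ hj₀1 with ⟨he, _⟩ | ⟨_, hb⟩
      · exact absurd he hj₀.2
      · have h1 : s ≤ |b j₀| := hsmin _ hj₀.1
        have hsk : 0 < Real.sqrt (blk j₀) := lt_of_lt_of_le one_pos (hsqrt1 _ (blk_ge_one hj₀1))
        rw [hb, abs_neg, abs_of_pos (div_pos one_pos (by positivity))] at h1
        rw [hLdef, hj₀sup]
        rw [le_div_iff₀ (by positivity)] at h1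
        linarith
  have hF1 : s * (10 : ℝ) ^ L ≤ 1 := by
    rcases hF2 with h | ⟨hL1, h⟩
    · rw [h]; simpa using hs1
    · have hsl : 1 ≤ Real.sqrt L := hsqrt1 _ hL1
      nlinarith [pow_pos (show (0:ℝ) < 10 by norm_num) L]
  -- cardinality bound
  set K₂ := ⌊1 / s ^ 2⌋₊ with hK₂def
  have hsub : Λ ⊆ (Icc 1 K₂).image nn ∪ (Icc 1 L).biUnion (fun l => Ioc (nn l) (nn l + 10 ^ l)) := by
    intro j hj
    have hj1 : 1 ≤ j := hΛ1 j hj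
    rcases hval j hj1 with ⟨hEq, hbj⟩ | ⟨hNe, hbj⟩
    · refine Finset.mem_union_left _ (Finset.mem_image.mpr ⟨blk j, ?_, hEq.symm⟩)
      refine Finset.mem_Icc.mpr ⟨blk_ge_one hj1, Nat.le_floor ?_⟩
      have h1 : s ≤ |b j| := hsmin _ hj
      have hsk : 0 < Real.sqrt (blk j) := lt_of_lt_of_le one_pos (hsqrt1 _ (blk_ge_one hj1))
      rw [hbj, abs_of_pos (div_pos one_pos hsk)] at h1
      rw [le_div_iff₀ hsk] at h1
      have hsq : Real.sqrt (blk j) ^ 2 = ((blk j : ℕ) : ℝ) := Real.sq_sqrt (by positivity)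
      rw [le_div_iff₀ (pow_pos hs0 2)]
      have h2 : ((blk j : ℕ) : ℝ) * s ^ 2 = (s * Real.sqrt (blk j)) ^ 2 := by
        rw [mul_pow, hsq]; ring
      rw [h2]
      nlinarith [mul_nonneg hs0.le hsk.le]
    · refine Finset.mem_union_right _ (Finset.mem_biUnion.mpr ⟨blk j, ?_, ?_⟩)
      · exact Finset.mem_Icc.mpr ⟨blk_ge_one hj1,
          Finset.le_sup (f := blk) (Finset.mem_filter.mpr ⟨hj, hNe⟩)⟩
      · exact Finset.mem_Ioc.mpr ⟨lt_of_le_of_ne (blk_le hj1) (Ne.symm hNe), blk_ub hj1⟩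
  have hcard2 : m ≤ K₂ + 2 * 10 ^ L := by
    have h1 : Λ.card ≤ ((Icc 1 K₂).image nn).card
        + ((Icc 1 L).biUnion (fun l => Ioc (nn l) (nn l + 10 ^ l))).card :=
      le_trans (Finset.card_le_card hsub) (Finset.card_union_le _ _)
    have h2 : ((Icc 1 K₂).image nn).card ≤ K₂ := by
      refine le_trans Finset.card_image_le ?_
      rw [Nat.card_Icc]; omega
    have h3 : ((Icc 1 L).biUnion (fun l => Ioc (nn l) (nn l + 10 ^ l))).card ≤ 2 * 10 ^ L := by
      refine le_trans (Finset.card_biUnion_le) ?_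
      have h4 : ∀ l ∈ Icc 1 L, (Ioc (nn l) (nn l + 10 ^ l)).card = 10 ^ l := by
        intro l _; rw [Nat.card_Ioc]; simp
      rw [Finset.sum_congr rfl h4]
      exact geom_sum_le10 L
    omega
  have hK₂r : (K₂ : ℝ) ≤ 1 / s ^ 2 := Nat.floor_le (by positivity)
  have hms : (m : ℝ) * s ^ 2 ≤ 3 := by
    have hcast : (m : ℝ) ≤ (K₂ : ℝ) + 2 * 10 ^ L := by exact_mod_cast hcard2
    have hinv : (1 / s ^ 2) * s ^ 2 = 1 := by field_simp
    nlinarith [mul_le_mul_of_nonneg_right hK₂r (sq_nonneg s),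
      mul_le_mul_of_nonneg_right hF1 hs0.le, sq_nonneg s, hs0, hs1]
  -- derive C * s < t and s < t
  have hXs : (3 * C ^ 2 / t ^ 2 + 3 / t ^ 2) * s ^ 2 < 3 :=
    lt_of_lt_of_le (mul_lt_mul_of_pos_right hmX (pow_pos hs0 2)) hms
  have hrw : (3 * C ^ 2 / t ^ 2 + 3 / t ^ 2) * s ^ 2 * t ^ 2 = (3 * C ^ 2 + 3) * s ^ 2 := by
    field_simp
  have hCs2 : (3 * C ^ 2 + 3) * s ^ 2 < 3 * t ^ 2 := by
    have := mul_lt_mul_of_pos_right hXs (pow_pos ht0 2)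
    rw [hrw] at this; linarith
  have hts2 : C ^ 2 * s ^ 2 < t ^ 2 := by
    have hexp : (3 * C ^ 2 + 3) * s ^ 2 = 3 * (C ^ 2 * s ^ 2) + 3 * s ^ 2 := by ring
    rw [hexp] at hCs2
    linarith [sq_nonneg s]
  have hsC : C * s < t := by
    have h1 : (C * s) ^ 2 < t ^ 2 := by rw [mul_pow]; linarith
    exact lt_of_pow_lt_pow_left₀ 2 ht0.le h1
  have hst : s < t := by
    have h1 : 1 * s ≤ C * s := mul_le_mul_of_nonneg_right hC1 hs0.le
    linarith
  -- K'
  set x := t ^ 2 / s ^ 2 with hxdef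
  have hx1 : 1 < x := by
    rw [hxdef, lt_div_iff₀ (pow_pos hs0 2)]; nlinarith
  have hx0 : (0 : ℝ) ≤ x := by linarith
  have hceil2 : 2 ≤ ⌈x⌉₊ := by
    have : 1 < ⌈x⌉₊ := Nat.lt_ceil.mpr (by exact_mod_cast hx1)
    omega
  set K' := ⌈x⌉₊ - 1 with hK'def
  have hK'1 : 1 ≤ K' := by omega
  have hK'cast : (K' : ℝ) = (⌈x⌉₊ : ℝ) - 1 := by
    rw [hK'def, Nat.cast_sub (by omega)]; norm_num
  have hK'lt : (K' : ℝ) < x := by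
    rw [hK'cast]
    have := Nat.ceil_lt_add_one hx0
    linarith
  have hK'ge : x - 1 ≤ (K' : ℝ) := by
    rw [hK'cast]
    have := Nat.le_ceil x
    linarith
  have hmemK : ∀ k ∈ Icc 1 K', nn k ∈ Λ := by
    intro k hk
    rw [Finset.mem_Icc] at hk
    refine hmem k hk.1 ?_
    have h1 : (k : ℝ) ≤ (K' : ℝ) := by exact_mod_cast hk.2
    have h2 : (k : ℝ) < x := lt_of_le_of_lt h1 hK'lt
    rw [hxdef, lt_div_iff₀ (pow_pos hs0 2)] at h2
    linarith
  set N₀ := nn K' - 1 with hN₀def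
  have hN₀1 : N₀ + 1 = nn K' := by
    have := nn_pos hK'1; omega
  -- bounded above
  have hbdd : BddAbove (Set.range fun N : ℕ => |∑ i ∈ Λ.filter (fun i => i ≤ N + 1), b i|) := by
    refine ⟨∑ i ∈ Λ, |b i|, ?_⟩
    rintro y ⟨N, rfl⟩
    calc |∑ i ∈ Λ.filter (fun i => i ≤ N + 1), b i|
        ≤ ∑ i ∈ Λ.filter (fun i => i ≤ N + 1), |b i| := Finset.abs_sum_le_sum_abs _ _
      _ ≤ ∑ i ∈ Λ, |b i| := Finset.sum_le_sum_of_subset_of_nonneg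
          (Finset.filter_subset _ _) (fun i _ _ => abs_nonneg _)
  refine lt_of_lt_of_le ?_ (le_ciSup hbdd N₀)
  refine lt_of_lt_of_le ?_ (le_abs_self _)
  -- goal : R < ∑ i ∈ Λ.filter (fun i => i ≤ N₀ + 1), b i
  set Λ' := Λ.filter (fun i => i ≤ N₀ + 1) with hΛ'def
  have hsplit : ∑ j ∈ Λ'.filter (fun j => j = nn (blk j)), b j
      + ∑ j ∈ Λ'.filter (fun j => ¬ j = nn (blk j)), b j = ∑ j ∈ Λ', b j :=
    Finset.sum_filter_add_sum_filter_not _ _ _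
  -- positive part
  have himg : (Icc 1 K').image nn ⊆ Λ'.filter (fun j => j = nn (blk j)) := by
    intro j hj
    obtain ⟨k, hk, rfl⟩ := Finset.mem_image.mp hj
    have hk' := Finset.mem_Icc.mp hk
    have hblk : blk (nn k) = k := blk_eq hk'.1 le_rfl (Nat.le_add_right _ _)
    refine Finset.mem_filter.mpr ⟨Finset.mem_filter.mpr ⟨hmemK _ hk, ?_⟩, by rw [hblk]⟩
    rw [hN₀1]
    exact nn_mono hk'.1 hk'.2
  have hposval : ∀ j ∈ Λ'.filter (fun j => j = nn (blk j)), 0 ≤ b j := by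
    intro j hj
    rw [Finset.mem_filter] at hj
    have hj1 : 1 ≤ j := hΛ1 j (Finset.mem_of_mem_filter _ hj.1)
    rcases hval j hj1 with ⟨_, hbj⟩ | ⟨hne, _⟩
    · rw [hbj]; positivity
    · exact absurd hj.2 hne
  have hpos : ∑ k ∈ Icc 1 K', 1 / Real.sqrt k
      ≤ ∑ j ∈ Λ'.filter (fun j => j = nn (blk j)), b j := by
    have hinj : ∀ a ∈ Icc 1 K', ∀ c ∈ Icc 1 K', nn a = nn c → a = c := by
      intro a ha c hc h
      have ha' := Finset.mem_Icc.mp ha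
      have hc' := Finset.mem_Icc.mp hc
      by_contra hne
      rcases lt_or_gt_of_ne hne with hl | hl
      · exact absurd h (ne_of_lt (nn_lt ha'.1 hl))
      · exact absurd h.symm (ne_of_lt (nn_lt hc'.1 hl))
    have h1 : ∑ j ∈ (Icc 1 K').image nn, b j = ∑ k ∈ Icc 1 K', 1 / Real.sqrt k := by
      rw [Finset.sum_image hinj]
      exact Finset.sum_congr rfl (fun k hk => hb1 k (Finset.mem_Icc.mp hk).1)
    rw [← h1]
    exact Finset.sum_le_sum_of_subset_of_nonneg himg (fun j hj _ => hposval j hj)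
  -- negative part
  have hnegsub : Λ'.filter (fun j => ¬ j = nn (blk j))
      ⊆ (Icc 1 L).biUnion (fun l => Ioc (nn l) (nn l + 10 ^ l)) := by
    intro j hj
    rw [Finset.mem_filter] at hj
    have hjΛ : j ∈ Λ := Finset.mem_of_mem_filter _ hj.1
    have hj1 : 1 ≤ j := hΛ1 j hjΛ
    refine Finset.mem_biUnion.mpr ⟨blk j, Finset.mem_Icc.mpr ⟨blk_ge_one hj1,
      Finset.le_sup (f := blk) (Finset.mem_filter.mpr ⟨hjΛ, hj.2⟩)⟩,
      Finset.mem_Ioc.mpr ⟨lt_of_le_of_ne (blk_le hj1) (Ne.symm hj.2), blk_ub hj1⟩⟩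
  set g : ℕ → ℝ := fun j => 1 / (10 ^ (blk j) * Real.sqrt (blk j)) with hgdef
  have hgnonneg : ∀ j, 0 ≤ g j := by
    intro j; rw [hgdef]; positivity
  have hnegeq : ∑ j ∈ Λ'.filter (fun j => ¬ j = nn (blk j)), b j
      = -∑ j ∈ Λ'.filter (fun j => ¬ j = nn (blk j)), g j := by
    rw [← Finset.sum_neg_distrib]
    refine Finset.sum_congr rfl (fun j hj => ?_)
    rw [Finset.mem_filter] at hj
    have hj1 : 1 ≤ j := hΛ1 j (Finset.mem_of_mem_filter _ hj.1)
    rcases hval j hj1 with ⟨he, _⟩ | ⟨_, hbj⟩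
    · exact absurd he hj.2
    · rw [hbj]
  have hdisj : (↑(Icc 1 L) : Set ℕ).PairwiseDisjoint
      (fun l => Ioc (nn l) (nn l + 10 ^ l)) := by
    intro a ha c hc hne
    simp only [Finset.coe_Icc, Set.mem_Icc] at ha hc
    rcases lt_or_gt_of_ne hne with h | h
    · have h1 : nn (a + 1) ≤ nn c := nn_mono (by omega) (by omega)
      rw [nn_succ ha.1] at h1
      refine Finset.disjoint_left.mpr (fun j hj hj' => ?_)
      rw [Finset.mem_Ioc] at hj hj'
      omega
    · have h1 : nn (c + 1) ≤ nn a := nn_mono (by omega) (by omega)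
      rw [nn_succ hc.1] at h1
      refine Finset.disjoint_left.mpr (fun j hj hj' => ?_)
      rw [Finset.mem_Ioc] at hj hj'
      omega
  have hbiUnion : ∑ j ∈ (Icc 1 L).biUnion (fun l => Ioc (nn l) (nn l + 10 ^ l)), g j
      = ∑ l ∈ Icc 1 L, 1 / Real.sqrt l := by
    rw [Finset.sum_biUnion hdisj]
    refine Finset.sum_congr rfl (fun l hl => ?_)
    have hl1 : 1 ≤ l := (Finset.mem_Icc.mp hl).1
    have hconst : ∀ j ∈ Ioc (nn l) (nn l + 10 ^ l), g j = 1 / (10 ^ l * Real.sqrt l) := by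
      intro j hj
      rw [Finset.mem_Ioc] at hj
      have hbl : blk j = l := blk_eq hl1 hj.1.le hj.2
      rw [hgdef]; simp only [hbl]
    rw [Finset.sum_congr rfl hconst, Finset.sum_const, Nat.card_Ioc]
    have he : nn l + 10 ^ l - nn l = 10 ^ l := by simp
    rw [he, nsmul_eq_mul]
    have hsl : (0:ℝ) < Real.sqrt l := lt_of_lt_of_le one_pos (hsqrt1 l hl1)
    have h10 : (0:ℝ) < (10:ℝ) ^ l := by positivity
    push_cast
    field_simp
  have hneg : -(∑ l ∈ Icc 1 L, 1 / Real.sqrt l)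
      ≤ ∑ j ∈ Λ'.filter (fun j => ¬ j = nn (blk j)), b j := by
    rw [hnegeq, neg_le_neg_iff, ← hbiUnion]
    exact Finset.sum_le_sum_of_subset_of_nonneg hnegsub (fun j _ _ => hgnonneg j)
  have hsum1 : Real.sqrt K' - 2 * Real.sqrt L ≤ ∑ j ∈ Λ', b j := by
    rw [← hsplit]
    have h1 := sum_rsqrt_ge K'
    have h2 := sum_rsqrt_le L
    linarith
  -- final numeric estimates
  have hsqx : Real.sqrt x = t / s := by
    rw [hxdef, show t ^ 2 / s ^ 2 = (t / s) ^ 2 by ring, Real.sqrt_sq (by positivity)]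
  have hsx1 : 1 ≤ Real.sqrt x := by
    rw [hsqx, le_div_iff₀ hs0]; linarith
  have hK'sq : t / s - 1 ≤ Real.sqrt K' := by
    have h1 : Real.sqrt (x - 1) ≤ Real.sqrt K' := Real.sqrt_le_sqrt hK'ge
    have hx2 : Real.sqrt x ^ 2 = x := Real.sq_sqrt hx0
    have h3 : (Real.sqrt x - 1) ^ 2 ≤ x - 1 := by nlinarith
    have h2 : Real.sqrt x - 1 ≤ Real.sqrt (x - 1) :=
      (Real.le_sqrt (by linarith) (by linarith)).mpr h3
    rw [← hsqx]
    linarith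
  have hfinal : s * (R + 1 + 2 * Real.sqrt L) < t := by
    rcases hF2 with hL0 | ⟨hL1, hsL⟩
    · rw [hL0]
      simp only [Nat.cast_zero, Real.sqrt_zero, mul_zero, add_zero]
      have hRC : R + 1 ≤ C := by rw [hCdef]; linarith
      nlinarith
    · by_cases hcase : R + 4 ≤ t * 10 ^ L
      · have hsl1 : 1 ≤ Real.sqrt L := hsqrt1 L hL1
        have hstep1 : t * (s * ((10:ℝ) ^ L * Real.sqrt L)) ≤ t := by nlinarith
        have hstep2 : (R + 4) * (s * Real.sqrt L) ≤ t * 10 ^ L * (s * Real.sqrt L) :=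
          mul_le_mul_of_nonneg_right hcase (by positivity)
        have hstep3 : (R + 4) * (s * Real.sqrt L) ≤ t := by nlinarith
        nlinarith [mul_le_mul_of_nonneg_left hsl1 (by positivity : (0:ℝ) ≤ R * s),
          mul_le_mul_of_nonneg_left hsl1 hs0.le, mul_pos hs0 (lt_of_lt_of_le one_pos hsl1)]
      · push_neg at hcase
        have h2L : 2 * Real.sqrt L ≤ 2 * (R + 4) / t := by
          rw [le_div_iff₀ ht0]
          nlinarith [sqrt_le_tenpow L, Real.sqrt_nonneg (L : ℝ)]
        have hRC : R + 1 + 2 * Real.sqrt L ≤ C := by rw [hCdef]; linarith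
        nlinarith
  have hmain : R + 1 + 2 * Real.sqrt L < t / s := by
    rw [lt_div_iff₀ hs0]
    linarith [hfinal]
  have : R < Real.sqrt K' - 2 * Real.sqrt L := by linarith
  linarith
end

section
/- Let X be a real vector space with a quasi-norm ‖·‖ with modulus of concavity α ≥ 1, equipped with a semi-normalized Markushevich basis (e_i, e*_i) with c := sup_i (1+‖e_i‖)(1+‖e*_i‖) < ∞, and assume the linear span of (e_i) is dense in X. Let t ∈ (0,1] and n = (n_k) a strictly increasing sequence of positive integers. Suppose there is C > 0 such that for every finitely supported x ∈ X and every t-greedy set A for x with |A| ∈ {n_k : k ∈ ℕ}, ‖P_A(x)‖ ≤ C·‖x‖. Then for every x ∈ X and every t-greedy set A for x with |A| ∈ {n_k : k ∈ ℕ}, ‖P_A(x)‖ ≤ α²·C·‖x‖. -/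
open Finset

/-- Coordinate projection `P_A x = ∑_{i ∈ A} e*_i(x) • e_i`. -/
def qproj {X : Type*} [AddCommGroup X] [Module ℝ X]
    (e : ℕ → X) (f : ℕ → X →ₗ[ℝ] ℝ) (A : Finset ℕ) (x : X) : X :=
  ∑ i ∈ A, f i x • e i

/-- `A` is a `t`-greedy set for `x`:
`min_{i ∈ A} |e*_i(x)| ≥ t · sup_{j ∉ A} |e*_j(x)|`. -/
def qGreedySet {X : Type*} [AddCommGroup X] [Module ℝ X]
    (f : ℕ → X →ₗ[ℝ] ℝ) (t : ℝ) (x : X) (A : Finset ℕ) : Prop :=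
  ∀ i ∈ A, ∀ j ∉ A, t * |f j x| ≤ |f i x|

lemma qsum_le {X : Type*} [AddCommGroup X] [Module ℝ X]
    (q : X → ℝ) (α : ℝ) (hα : 1 ≤ α)
    (hq0 : ∀ x : X, 0 ≤ q x) (hq00 : q 0 = 0)
    (hqa : ∀ x y : X, q (x + y) ≤ α * (q x + q y))
    (B : Finset ℕ) (v : ℕ → X) :
    q (∑ i ∈ B, v i) ≤ α ^ B.card * ∑ i ∈ B, q (v i) := by
  classical
  induction B using Finset.induction_on with
  | empty => simp [hq00]
  | insert _ _ ha _ =>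
    rename_i a B ih
    rw [Finset.sum_insert ha, Finset.sum_insert ha, Finset.card_insert_of_notMem ha]
    have h1 := hqa (v a) (∑ i ∈ B, v i)
    have h3 : 0 ≤ ∑ i ∈ B, q (v i) := Finset.sum_nonneg fun i _ => hq0 _
    have h4 : (1:ℝ) ≤ α ^ B.card := one_le_pow₀ hα
    have h5 : 0 ≤ q (v a) := hq0 _
    have h6 : 0 ≤ q (∑ i ∈ B, v i) := hq0 _
    have h7 : (0:ℝ) < α := lt_of_lt_of_le one_pos hα
    rw [pow_succ]
    nlinarith [mul_le_mul_of_nonneg_left ih h7.le, mul_nonneg (mul_nonneg (sub_nonneg.mpr h4) h7.le) h5]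

lemma qcoef {X : Type*} [AddCommGroup X] [Module ℝ X]
    (e : ℕ → X) (f : ℕ → X →ₗ[ℝ] ℝ)
    (hbio : ∀ k i, f k (e i) = if k = i then 1 else 0)
    (B : Finset ℕ) (g : ℕ → ℝ) (k : ℕ) :
    f k (∑ i ∈ B, g i • e i) = if k ∈ B then g k else 0 := by
  classical
  rw [map_sum]
  simp only [map_smul, smul_eq_mul, hbio, mul_ite, mul_one, mul_zero]
  exact Finset.sum_ite_eq B k g


/-- If the `t`-greedy projections of cardinality in `n` are bounded by `C` on
finitely supported vectors, they are bounded by `α²·C` on the whole space. -/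
theorem stmt_9 {X : Type*} [AddCommGroup X] [Module ℝ X]
    (q : X → ℝ) (α : ℝ) (hα : 1 ≤ α)
    (hq0 : ∀ x : X, 0 ≤ q x) (hqz : ∀ x : X, q x = 0 ↔ x = 0)
    (hqs : ∀ (a : ℝ) (x : X), q (a • x) = |a| * q x)
    (hqa : ∀ x y : X, q (x + y) ≤ α * (q x + q y))
    (e : ℕ → X) (f : ℕ → X →ₗ[ℝ] ℝ) (fn : ℕ → ℝ)
    (hfn0 : ∀ i, 0 ≤ fn i) (hfb : ∀ (i : ℕ) (x : X), |f i x| ≤ fn i * q x)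
    (hbio : ∀ k i, f k (e i) = if k = i then 1 else 0)
    (c : ℝ) (hc : ∀ i, (1 + q (e i)) * (1 + fn i) ≤ c)
    (hdense : ∀ x : X, ∀ ε : ℝ, 0 < ε →
      ∃ y ∈ Submodule.span ℝ (Set.range e), q (x - y) ≤ ε)
    (t : ℝ) (ht0 : 0 < t) (ht1 : t ≤ 1)
    (n : ℕ → ℕ) (hn : StrictMono n) (hnpos : ∀ k, 0 < n k)
    (C : ℝ) (hC : 0 < C)
    (hfin : ∀ x ∈ Submodule.span ℝ (Set.range e), ∀ A : Finset ℕ,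
      qGreedySet f t x A → (∃ k, A.card = n k) → q (qproj e f A x) ≤ C * q x) :
    ∀ (x : X) (A : Finset ℕ), qGreedySet f t x A → (∃ k, A.card = n k) →
      q (qproj e f A x) ≤ α ^ 2 * C * q x := by
  classical
  intro x A hA hcard
  have hα0 : (0:ℝ) < α := lt_of_lt_of_le one_pos hα
  have hq00 : q (0:X) = 0 := by simpa using hqs 0 0
  have hqneg : ∀ z : X, q (-z) = q z := by
    intro z
    have := hqs (-1) z
    simpa using this
  have hsum := qsum_le q α hα hq0 hq00 hqa
  have hc1 : (1:ℝ) ≤ c := le_trans (by nlinarith [hq0 (e 0), hfn0 0]) (hc 0)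
  have hfnc : ∀ j, fn j ≤ c := fun j => by nlinarith [hq0 (e j), hfn0 j, hc j]
  -- constants
  set N : ℝ := α ^ A.card * ∑ i ∈ A, q (e i) with hNdef
  have hN0 : 0 ≤ N := by
    apply mul_nonneg (pow_nonneg hα0.le _)
    exact Finset.sum_nonneg fun i _ => hq0 _
  set K1 : ℝ := α * (α * (1 + c * N) + t * c * N) with hK1def
  have hK1 : 0 ≤ K1 := by positivity
  set K2 : ℝ := α ^ 2 * C * K1 + α * (t * c * N) with hK2def
  have hK2 : 0 ≤ K2 := by positivity
  refine le_of_forall_pos_le_add ?_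
  intro ε' hε'
  set ε : ℝ := ε' / (K2 + 1) with hεdef
  have hε : 0 < ε := by positivity
  obtain ⟨y, hy, hyx⟩ := hdense x ε hε
  have hqyx : q (y - x) ≤ ε := by
    have h := hqneg (x - y)
    rw [neg_sub] at h
    linarith [hyx, h.ge, h.le]
  set θ : ℝ := t * c * ε with hθdef
  have hθ : 0 < θ := by positivity
  set s : ℕ → ℝ := fun i => if 0 ≤ f i x then 1 else -1 with hsdef
  set g : ℕ → ℝ := fun i => f i x + θ * s i with hgdef
  set u : X := (∑ i ∈ A, g i • e i) + (y - qproj e f A y) with hudef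
  have hgabs : ∀ i, |g i| = |f i x| + θ := by
    intro i
    by_cases h : 0 ≤ f i x
    · simp only [hgdef, hsdef, if_pos h, mul_one]
      rw [abs_of_nonneg (by linarith), abs_of_nonneg h]
    · push_neg at h
      simp only [hgdef, hsdef, if_neg (not_le.mpr h), mul_neg_one]
      rw [abs_of_neg (by linarith), abs_of_neg h]
      ring
  have hfyj : ∀ j, |f j y| ≤ |f j x| + c * ε := by
    intro j
    have h1 : |f j y - f j x| ≤ fn j * q (y - x) := by
      have := hfb j (y - x)
      rwa [map_sub] at this
    have h2 : fn j * q (y - x) ≤ c * ε :=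
      mul_le_mul (hfnc j) hqyx (hq0 _) (by linarith)
    calc |f j y| = |f j x + (f j y - f j x)| := by ring_nf
      _ ≤ |f j x| + |f j y - f j x| := abs_add_le _ _
      _ ≤ |f j x| + c * ε := by linarith
  have hfu : ∀ k, f k u = if k ∈ A then g k else f k y := by
    intro k
    by_cases hk : k ∈ A <;>
      simp [hudef, map_add, map_sub, qcoef e f hbio A g k, qproj,
        qcoef e f hbio A (fun i => f i y) k, hk]
  have hgreedyu : qGreedySet f t u A := by
    intro i hi j hj
    rw [hfu i, hfu j, if_pos hi, if_neg hj, hgabs i]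
    have h1 := hA i hi j hj
    have h2 := hfyj j
    nlinarith [abs_nonneg (f j y), abs_nonneg (f j x)]
  have humem : u ∈ Submodule.span ℝ (Set.range e) := by
    apply Submodule.add_mem
    · exact Submodule.sum_mem _ fun i _ =>
        Submodule.smul_mem _ _ (Submodule.subset_span ⟨i, rfl⟩)
    · exact Submodule.sub_mem _ hy (Submodule.sum_mem _ fun i _ =>
        Submodule.smul_mem _ _ (Submodule.subset_span ⟨i, rfl⟩))
  have hCu := hfin u humem A hgreedyu hcard
  set D : X := ∑ i ∈ A, (θ * s i) • e i with hDdef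
  have hsplit : (∑ i ∈ A, g i • e i) = qproj e f A x + D := by
    rw [qproj, hDdef, ← Finset.sum_add_distrib]
    exact Finset.sum_congr rfl fun i _ => add_smul _ _ _
  have hPAu : qproj e f A u = qproj e f A x + D := by
    rw [← hsplit, qproj]
    exact Finset.sum_congr rfl fun i hi => by rw [hfu i, if_pos hi]
  have hqD : q D ≤ θ * N := by
    have h1 := hsum A (fun i => (θ * s i) • e i)
    have h2 : ∀ i ∈ A, q ((θ * s i) • e i) = θ * q (e i) := by
      intro i _
      rw [hqs, abs_mul, abs_of_pos hθ]
      have : |s i| = 1 := by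
        by_cases h : 0 ≤ f i x <;> simp [hsdef, h]
      rw [this, mul_one]
    rw [Finset.sum_congr rfl h2, ← Finset.mul_sum] at h1
    calc q D ≤ α ^ A.card * (θ * ∑ i ∈ A, q (e i)) := h1
      _ = θ * N := by rw [hNdef]; ring
  have hqPyx : q (qproj e f A (y - x)) ≤ c * ε * N := by
    have h1 := hsum A (fun i => f i (y - x) • e i)
    have h2 : ∀ i ∈ A, q (f i (y - x) • e i) ≤ c * ε * q (e i) := by
      intro i _
      rw [hqs]
      apply mul_le_mul_of_nonneg_right _ (hq0 _)
      calc |f i (y - x)| ≤ fn i * q (y - x) := hfb i _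
        _ ≤ c * ε := mul_le_mul (hfnc i) hqyx (hq0 _) (by linarith)
    calc q (qproj e f A (y - x)) ≤ α ^ A.card * ∑ i ∈ A, q (f i (y - x) • e i) := h1
      _ ≤ α ^ A.card * ∑ i ∈ A, (c * ε * q (e i)) := by
          apply mul_le_mul_of_nonneg_left (Finset.sum_le_sum h2) (pow_nonneg hα0.le _)
      _ = c * ε * N := by rw [← Finset.mul_sum, hNdef]; ring
  have hproj_sub : qproj e f A (y - x) = qproj e f A y - qproj e f A x := by
    rw [qproj, qproj, qproj, ← Finset.sum_sub_distrib]
    exact Finset.sum_congr rfl fun i _ => by rw [map_sub, sub_smul]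
  have hux : u - x = ((y - x) - qproj e f A (y - x)) + D := by
    rw [hproj_sub, hudef, hsplit]
    abel
  have hqux : q (u - x) ≤ K1 * ε := by
    have h1 : q ((y - x) - qproj e f A (y - x)) ≤ α * (ε + c * ε * N) := by
      have h := hqa (y - x) (-(qproj e f A (y - x)))
      rw [hqneg] at h
      have : (y - x) - qproj e f A (y - x) = (y - x) + -(qproj e f A (y - x)) := by abel
      rw [this]
      apply le_trans h
      apply mul_le_mul_of_nonneg_left _ hα0.le
      linarith
    have h2 := hqa ((y - x) - qproj e f A (y - x)) D
    rw [← hux] at h2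
    calc q (u - x) ≤ α * (q ((y - x) - qproj e f A (y - x)) + q D) := h2
      _ ≤ α * (α * (ε + c * ε * N) + θ * N) := by
          apply mul_le_mul_of_nonneg_left _ hα0.le
          linarith
      _ = K1 * ε := by rw [hK1def, hθdef]; ring
  have hqu : q u ≤ α * (q x + K1 * ε) := by
    have h1 : u = x + (u - x) := by abel
    calc q u = q (x + (u - x)) := by rw [← h1]
      _ ≤ α * (q x + q (u - x)) := hqa _ _
      _ ≤ α * (q x + K1 * ε) := by
          apply mul_le_mul_of_nonneg_left _ hα0.le
          linarith
  have hfinal : q (qproj e f A x) ≤ α ^ 2 * C * q x + K2 * ε := by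
    have h1 : qproj e f A x = qproj e f A u + -D := by rw [hPAu]; abel
    have h2 := hqa (qproj e f A u) (-D)
    rw [hqneg] at h2
    have h3 : q (qproj e f A u) ≤ C * (α * (q x + K1 * ε)) :=
      le_trans hCu (mul_le_mul_of_nonneg_left hqu hC.le)
    calc q (qproj e f A x) = q (qproj e f A u + -D) := by rw [← h1]
      _ ≤ α * (q (qproj e f A u) + q D) := h2
      _ ≤ α * (C * (α * (q x + K1 * ε)) + θ * N) := by
          apply mul_le_mul_of_nonneg_left _ hα0.le
          linarith
      _ = α ^ 2 * C * q x + (α ^ 2 * C * K1 + α * (t * c * N)) * ε := by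
          rw [hθdef]; ring
      _ = α ^ 2 * C * q x + K2 * ε := by rw [hK2def]
  have hK2ε : K2 * ε ≤ ε' := by
    rw [hεdef]
    rw [div_eq_mul_inv, ← mul_assoc]
    have h1 : K2 * ε' ≤ (K2 + 1) * ε' := by nlinarith
    have h2 : (0:ℝ) < K2 + 1 := by linarith
    rw [mul_inv_le_iff₀ h2] -- maybe wrong name
    linarith
  linarith
end
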